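/- Extend π_{n-2} and π_{n-1} K-linearly from I_F^{n-2} to K_F (identifying K_F with I_F^{n-2} ⊗_R K). Then for every ρ ∈ K_F one has π_{n-1}(ρ·f_0·θ) = -π_{n-2}(ρ). -/

import Mathlib

open Polynomial Matrix MeasureTheory
open scoped Classical
noncomputable section
namespace BHS



/-! ### Binary forms and the rings they cut out, over a general base -/

variable (R K : Type) [CommRing R] [Field K] [Algebra R K]

/-- The one-variable polynomial `F(x,1)` of the binary form of degree `n` with
coefficient vector `c` (so `F(x,z) = ∑ c i · x^(n-i) · z^i`), over `K`. -/
def binPoly (n : ℕ) (c : ℕ → R) : Polynomial K :=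
  ∑ i ∈ Finset.range (n + 1), Polynomial.C (algebraMap R K (c i)) * Polynomial.X ^ (n - i)

/-- The étale algebra `K_F = K[x]/(F(x,1))`. -/
abbrev KF (n : ℕ) (c : ℕ → R) : Type := AdjoinRoot (binPoly R K n c)

/-- θ, the image of x in K_F. -/
def θF (n : ℕ) (c : ℕ → R) : KF R K n c := AdjoinRoot.root _

/-- `ζ_i = ∑_{j<i} f_j θ^{i-j}`. -/
def ζF (n : ℕ) (c : ℕ → R) (i : ℕ) : KF R K n c :=
  ∑ j ∈ Finset.range i, algebraMap R (KF R K n c) (c j) * θF R K n c ^ (i - j)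

/-- The ring `R_F`, as the free `R`-submodule of `K_F` with basis `1, ζ_1, …, ζ_{n-1}`
(a subring by Nakagawa's theorem). -/
def RFmod (n : ℕ) (c : ℕ → R) : Submodule R (KF R K n c) :=
  Submodule.span R ({1} ∪ {x | ∃ i, 1 ≤ i ∧ i ≤ n - 1 ∧ x = ζF R K n c i})

/-- The fractional ideal `I_F^k`, as the free `R`-submodule of `K_F` with basis
`1, θ, …, θ^k, ζ_{k+1}, …, ζ_{n-1}`. -/
def IFmod (n : ℕ) (c : ℕ → R) (k : ℕ) : Submodule R (KF R K n c) :=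
  Submodule.span R ({x | ∃ j ≤ k, x = θF R K n c ^ j} ∪
    {x | ∃ i, k + 1 ≤ i ∧ i ≤ n - 1 ∧ x = ζF R K n c i})

/-- `R_F` is the maximal order (the integral closure of `R`) in `K_F`. -/
def IsMaxOrder (n : ℕ) (c : ℕ → R) : Prop :=
  RFmod R K n c = Subalgebra.toSubmodule (integralClosure R (KF R K n c))

/-- `M` is stable under multiplication by `R_F`, i.e. `M` is an `R_F`-submodule of `K_F`. -/
def IsStable (n : ℕ) (c : ℕ → R) (M : Submodule R (KF R K n c)) : Prop :=
  ∀ ρ ∈ RFmod R K n c, ∀ x ∈ M, ρ * x ∈ M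

/-- `M` is an invertible fractional ideal of `R_F`. -/
def IsInvIdeal (n : ℕ) (c : ℕ → R) (M : Submodule R (KF R K n c)) : Prop :=
  IsStable R K n c M ∧
    ∃ N : Submodule R (KF R K n c), IsStable R K n c N ∧ M * N = RFmod R K n c

/-- The principal fractional ideal of `R_F` generated by `α`. -/
def principal (n : ℕ) (c : ℕ → R) (α : KF R K n c) : Submodule R (KF R K n c) :=
  Submodule.span R {α} * RFmod R K n c

/-- `ρ` is a unit of the order `R_F`. -/
def IsUnitRF (n : ℕ) (c : ℕ → R) (ρ : KF R K n c) : Prop :=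
  ρ ∈ RFmod R K n c ∧ ∃ σ ∈ RFmod R K n c, ρ * σ = 1

/-- `#R_F^×[2]`, the number of 2-torsion units of `R_F`. -/
def twoTorsUnitsCount (n : ℕ) (c : ℕ → R) : ℕ :=
  Nat.card {ρ : KF R K n c // ρ ∈ RFmod R K n c ∧ ρ ^ 2 = 1}

/-- The number of 2-torsion elements of the ideal class group `Cl(R_F)`: the number of
invertible fractional ideals of `R_F` whose square is principal, counted modulo
principal fractional ideals. -/
def clTwoCount (n : ℕ) (c : ℕ → R) : ℕ :=
  Nat.card (Quot (fun (I J : {M : Submodule R (KF R K n c) //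
      IsInvIdeal R K n c M ∧
        ∃ α : KF R K n c, IsUnit α ∧ M * M = principal R K n c α}) =>
    ∃ α : KF R K n c, IsUnit α ∧
      (I : Submodule R (KF R K n c)) =
        Submodule.span R {α} * (J : Submodule R (KF R K n c))))

/-- `α ∈ K_F` is totally positive: positive under every real embedding. -/
def TotPos (n : ℕ) (c : ℕ → R) (α : KF R K n c) : Prop :=
  ∀ φ : KF R K n c →+* ℝ, 0 < φ α

/-- The number of 2-torsion elements of the narrow class group `Cl⁺(R_F)`. -/
def clTwoCountPlus (n : ℕ) (c : ℕ → R) : ℕ :=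
  Nat.card (Quot (fun (I J : {M : Submodule R (KF R K n c) //
      IsInvIdeal R K n c M ∧
        ∃ α : KF R K n c, IsUnit α ∧ TotPos R K n c α ∧ M * M = principal R K n c α}) =>
    ∃ α : KF R K n c, IsUnit α ∧ TotPos R K n c α ∧
      (I : Submodule R (KF R K n c)) =
        Submodule.span R {α} * (J : Submodule R (KF R K n c))))

/-- The order of the ideal class group of `R_F`. -/
def clCount (n : ℕ) (c : ℕ → R) : ℕ :=
  Nat.card (Quot (fun (I J : {M : Submodule R (KF R K n c) // IsInvIdeal R K n c M}) =>
    ∃ α : KF R K n c, IsUnit α ∧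
      (I : Submodule R (KF R K n c)) =
        Submodule.span R {α} * (J : Submodule R (KF R K n c))))

/-- The order of the narrow class group of `R_F`. -/
def clCountPlus (n : ℕ) (c : ℕ → R) : ℕ :=
  Nat.card (Quot (fun (I J : {M : Submodule R (KF R K n c) // IsInvIdeal R K n c M}) =>
    ∃ α : KF R K n c, IsUnit α ∧ TotPos R K n c α ∧
      (I : Submodule R (KF R K n c)) =
        Submodule.span R {α} * (J : Submodule R (KF R K n c))))


/-! ### Bases, norms, and the functionals π_{n-2}, π_{n-1} -/

/-- A `K`-basis of `K_F` (the power basis reindexed by `Fin n`). -/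
def basisKF (n : ℕ) (c : ℕ → R) (hne : binPoly R K n c ≠ 0)
    (hdeg : (binPoly R K n c).natDegree = n) : Module.Basis (Fin n) K (KF R K n c) :=
  (AdjoinRoot.powerBasis hne).basis.reindex (finCongr hdeg)

/-- The vector `(1, ζ_1, …, ζ_{n-1})`, the standard basis of `R_F`. -/
def eVec (n : ℕ) (c : ℕ → R) : Fin n → KF R K n c :=
  fun i => if (i : ℕ) = 0 then 1 else ζF R K n c i

/-- The vector `(1, θ, …, θ^k, ζ_{k+1}, …, ζ_{n-1})`, the standard basis of `I_F^k`. -/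
def stdVec (n : ℕ) (c : ℕ → R) (k : ℕ) : Fin n → KF R K n c :=
  fun i => if (i : ℕ) ≤ k then θF R K n c ^ (i : ℕ) else ζF R K n c i

/-- The norm of a based fractional ideal with basis `b`: the determinant of the `K`-linear
map taking the standard basis `1, ζ_1, …, ζ_{n-1}` of `R_F` to `b`. -/
def normBased (n : ℕ) (c : ℕ → R) (hne : binPoly R K n c ≠ 0)
    (hdeg : (binPoly R K n c).natDegree = n) (b : Fin n → KF R K n c) : K :=
  ((basisKF R K n c hne hdeg).toMatrix b).det /
    ((basisKF R K n c hne hdeg).toMatrix (eVec R K n c)).det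

/-- Coordinates of `ρ ∈ K_F` in the basis `1, θ, …, θ^{n-2}, ζ_{n-1}` of `I_F^{n-2} ⊗ K = K_F`. -/
def coordStd (n : ℕ) (c : ℕ → R) (hne : binPoly R K n c ≠ 0)
    (hdeg : (binPoly R K n c).natDegree = n) (ρ : KF R K n c) : Fin n → K :=
  Matrix.mulVec ((basisKF R K n c hne hdeg).toMatrix (stdVec R K n c (n - 2)))⁻¹
    (fun i => (basisKF R K n c hne hdeg).repr ρ i)

/-- The functional `π_{n-2}` (extended `K`-linearly to all of `K_F`): it kills
`1, θ, …, θ^{n-3}, ζ_{n-1}` and sends `θ^{n-2}` to `1`. -/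
def piN2 (n : ℕ) (c : ℕ → R) (hn : 0 < n) (hne : binPoly R K n c ≠ 0)
    (hdeg : (binPoly R K n c).natDegree = n) (ρ : KF R K n c) : K :=
  coordStd R K n c hne hdeg ρ ⟨n - 2, by omega⟩

/-- The functional `π_{n-1}` (extended `K`-linearly to all of `K_F`): it kills
`1, θ, …, θ^{n-2}` and sends `ζ_{n-1}` to `-1`. -/
def piN1 (n : ℕ) (c : ℕ → R) (hn : 0 < n) (hne : binPoly R K n c ≠ 0)
    (hdeg : (binPoly R K n c).natDegree = n) (ρ : KF R K n c) : K :=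
  - coordStd R K n c hne hdeg ρ ⟨n - 1, by omega⟩



lemma basisKF_apply (n : ℕ) (c : ℕ → R) (hne : binPoly R K n c ≠ 0)
    (hdeg : (binPoly R K n c).natDegree = n) (m : Fin n) :
    basisKF R K n c hne hdeg m = θF R K n c ^ (m : ℕ) := by
  simp only [basisKF, Module.Basis.reindex_apply, PowerBasis.coe_basis,
    AdjoinRoot.powerBasis_gen, θF]
  rfl

lemma repr_pow (n : ℕ) (c : ℕ → R) (hne : binPoly R K n c ≠ 0)
    (hdeg : (binPoly R K n c).natDegree = n) (m : ℕ) (hm : m < n) (j : Fin n) :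
    (basisKF R K n c hne hdeg).repr (θF R K n c ^ m) j
      = if (j : ℕ) = m then 1 else 0 := by
  rw [show θF R K n c ^ m = basisKF R K n c hne hdeg ⟨m, hm⟩ from
    (basisKF_apply R K n c hne hdeg ⟨m, hm⟩).symm]
  rw [Module.Basis.repr_self]
  rw [Finsupp.single_apply]
  simp [Fin.ext_iff, eq_comm]

lemma smul_eq (n : ℕ) (c : ℕ → R) (a : R) (x : KF R K n c) :
    algebraMap R (KF R K n c) a * x = algebraMap R K a • x := by
  rw [Algebra.smul_def, IsScalarTower.algebraMap_apply R K (KF R K n c)]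


lemma coeff_n (n : ℕ) (c : ℕ → R) : (binPoly R K n c).coeff n = algebraMap R K (c 0) := by
  rw [binPoly, Polynomial.finset_sum_coeff]
  rw [Finset.sum_eq_single 0]
  · simp
  · intro i hi hi0
    rw [Polynomial.coeff_C_mul, Polynomial.coeff_X_pow]
    rw [if_neg (by simp at hi; omega), mul_zero]
  · simp

lemma c0K_ne (n : ℕ) (c : ℕ → R) (hne : binPoly R K n c ≠ 0) (hdeg : (binPoly R K n c).natDegree = n) :
    algebraMap R K (c 0) ≠ 0 := by
  have h := Polynomial.leadingCoeff_ne_zero.mpr hne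
  rw [Polynomial.leadingCoeff, hdeg, coeff_n] at h
  exact h

lemma repr_zeta (n : ℕ) (c : ℕ → R) (hne : binPoly R K n c ≠ 0) (hdeg : (binPoly R K n c).natDegree = n)
    (hn : 3 ≤ n) (j : Fin n) :
    (basisKF R K n c hne hdeg).repr (ζF R K n c (n-1)) j
      = if (j : ℕ) = 0 then 0 else algebraMap R K (c (n - 1 - (j : ℕ))) := by
  rw [ζF]
  have h1 : ∀ i ∈ Finset.range (n-1),
      algebraMap R (KF R K n c) (c i) * θF R K n c ^ (n - 1 - i)
        = algebraMap R K (c i) • θF R K n c ^ (n - 1 - i) := fun i _ =>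
    smul_eq R K n c _ _
  rw [Finset.sum_congr rfl h1, map_sum, Finsupp.coe_finset_sum, Finset.sum_apply]
  have h2 : ∀ i ∈ Finset.range (n-1),
      ((basisKF R K n c hne hdeg).repr (algebraMap R K (c i) • θF R K n c ^ (n-1-i))) j
        = algebraMap R K (c i) * (if (j : ℕ) = n-1-i then 1 else 0) := by
    intro i hi
    simp only [Finset.mem_range] at hi
    rw [_root_.map_smul, Finsupp.smul_apply, repr_pow R K n c hne hdeg _ (by omega),
      smul_eq_mul]
  rw [Finset.sum_congr rfl h2]
  by_cases hj : (j : ℕ) = 0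
  · rw [if_pos hj, Finset.sum_eq_zero]
    intro i hi
    simp only [Finset.mem_range] at hi
    rw [if_neg (by omega), mul_zero]
  · rw [if_neg hj, Finset.sum_eq_single (n - 1 - (j : ℕ))]
    · rw [if_pos (by have := j.isLt; omega), mul_one]
    · intro i hi hne'
      simp only [Finset.mem_range] at hi
      rw [if_neg (by omega), mul_zero]
    · intro h
      exact absurd (Finset.mem_range.mpr (by have := j.isLt; omega)) h

lemma sum_rel (n : ℕ) (c : ℕ → R) : ∑ i ∈ Finset.range (n+1),
    (algebraMap R K (c i)) • θF R K n c ^ (n - i) = 0 := by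
  have h0 : Polynomial.aeval (θF R K n c) (binPoly R K n c) = 0 := by
    rw [θF, AdjoinRoot.aeval_eq, AdjoinRoot.mk_self]
  simp only [binPoly, map_sum] at h0
  rw [← h0]
  refine Finset.sum_congr rfl fun i _ => ?_
  rw [_root_.map_mul, Polynomial.aeval_C, map_pow, Polynomial.aeval_X, Algebra.smul_def]

lemma repr_pow_n (n : ℕ) (c : ℕ → R) (hne : binPoly R K n c ≠ 0) (hdeg : (binPoly R K n c).natDegree = n)
    (hn : 3 ≤ n) :
    (basisKF R K n c hne hdeg).repr (θF R K n c ^ n) ⟨n-1, by omega⟩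
      = - algebraMap R K (c 1) / algebraMap R K (c 0) := by
  have h := sum_rel R K n c
  have h2 := congrArg (fun x => ((basisKF R K n c hne hdeg).repr x) ⟨n-1, by omega⟩) h
  simp only [map_sum, map_zero, Finsupp.coe_finset_sum, Finset.sum_apply,
    Finsupp.coe_zero, Pi.zero_apply, _root_.map_smul, Finsupp.smul_apply] at h2
  rw [Finset.sum_eq_add_of_mem 0 1 (by simp) (by simp; omega) (by omega) ?side] at h2
  case side =>
    intro i hi hi'
    simp only [Finset.mem_range] at hi
    have hI : i ≠ 0 ∧ i ≠ 1 := ⟨hi'.1, hi'.2⟩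
    rw [repr_pow R K n c hne hdeg _ (show n - i < n by omega), if_neg (by simp; omega),
      smul_zero]
  · simp only [Nat.sub_zero] at h2
    rw [repr_pow R K n c hne hdeg (n-1) (by omega)] at h2
    rw [if_pos rfl, smul_eq_mul, smul_eq_mul, mul_one] at h2
    have hc0 := c0K_ne R K n c hne hdeg
    field_simp
    linear_combination h2

set_option maxHeartbeats 2000000 in
/-- Lemma 2.3: for every `ρ ∈ K_F`,
`π_{n-1}(ρ·f_0·θ) = -π_{n-2}(ρ)`. -/
theorem pi_shift_identity
    (R K : Type) [CommRing R] [IsDomain R] [IsPrincipalIdealRing R] [Field K]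
    [Algebra R K] [IsFractionRing R K]
    (n : ℕ) (hn : 3 ≤ n) (c : ℕ → R) (hf0 : c 0 ≠ 0)
    (hne : binPoly R K n c ≠ 0) (hdeg : (binPoly R K n c).natDegree = n)
    (hsep : (binPoly R K n c).Separable) :
    ∀ ρ : KF R K n c,
      piN1 R K n c (by omega) hne hdeg (ρ * (algebraMap R (KF R K n c) (c 0) * θF R K n c)) =
        - piN2 R K n c (by omega) hne hdeg ρ := by
  intro ρ
  set b := basisKF R K n c hne hdeg with hb
  set a : ℕ → K := fun i => algebraMap R K (c i) with ha
  have hc0 : a 0 ≠ 0 := c0K_ne R K n c hne hdeg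
  set v : Fin n → K := fun j => b.repr (ζF R K n c (n-1)) j with hvdef
  have hv : ∀ j : Fin n, v j = if (j:ℕ) = 0 then 0 else a (n-1-(j:ℕ)) := fun j =>
    repr_zeta R K n c hne hdeg hn j
  -- the matrix M and its inverse N
  set M := b.toMatrix (stdVec R K n c (n-2)) with hMdef
  have hM : ∀ j i : Fin n, M j i =
      if (i:ℕ) ≤ n-2 then (if (j:ℕ) = (i:ℕ) then 1 else 0) else v j := by
    intro j i
    rw [hMdef, Module.Basis.toMatrix_apply, stdVec]
    by_cases hi : (i:ℕ) ≤ n-2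
    · rw [if_pos hi, if_pos hi, repr_pow R K n c hne hdeg _ (by omega)]
    · rw [if_neg hi, if_neg hi]
      have hieq : (i:ℕ) = n-1 := by have := i.isLt; omega
      rw [hieq, hvdef]
  set N : Matrix (Fin n) (Fin n) K := fun j i =>
    if (i:ℕ) = n-1 then (if (j:ℕ) = n-1 then (a 0)⁻¹ else - v j * (a 0)⁻¹)
    else (if j = i then 1 else 0) with hNdef
  have hlast : ((⟨n-1, by omega⟩ : Fin n) : ℕ) = n-1 := rfl
  have hMN : M * N = 1 := by
    ext j k
    rw [Matrix.mul_apply]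
    by_cases hk : (k:ℕ) = n-1
    · have hsplit := Finset.sum_erase_add Finset.univ
        (fun i => M j i * N i k) (Finset.mem_univ (⟨n-1, by omega⟩ : Fin n))
      rw [← hsplit]
      beta_reduce
      have hNik : ∀ i : Fin n, N i k =
          if (i:ℕ) = n-1 then (a 0)⁻¹ else - v i * (a 0)⁻¹ := by
        intro i; rw [hNdef]; simp only [if_pos hk]
      have hterm : M j ⟨n-1, by omega⟩ * N ⟨n-1, by omega⟩ k = v j * (a 0)⁻¹ := by
        rw [hNik, hM]
        simp only [hlast]
        rw [if_neg (show ¬(n-1 ≤ n-2) by omega)]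
        simp
      rw [hterm]
      by_cases hj : (j:ℕ) = n-1
      · have hjeq : j = ⟨n-1, by omega⟩ := Fin.ext hj
        rw [Finset.sum_eq_zero, zero_add]
        · have : v j = a 0 := by rw [hv, if_neg (by omega), hj, Nat.sub_self]
          rw [this, mul_inv_cancel₀ hc0, Matrix.one_apply, if_pos (Fin.ext (hj.trans hk.symm))]
        · intro i hi
          rw [Finset.mem_erase] at hi
          have hine : (i:ℕ) ≠ n-1 := fun h => hi.1 (Fin.ext h)
          have hile : (i:ℕ) ≤ n-2 := by have := i.isLt; omega
          rw [hM, if_pos hile, if_neg (by omega), zero_mul]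
      · rw [Finset.sum_eq_single j]
        · have hj2 : (j:ℕ) ≤ n-2 := by have := j.isLt; omega
          rw [hM, if_pos hj2, if_pos rfl, hNik, if_neg hj, one_mul,
            Matrix.one_apply, if_neg (fun h => hj (by rw [h]; exact hk))]
          ring
        · intro i hi hij
          by_cases hi2 : (i:ℕ) ≤ n-2
          · rw [hM, if_pos hi2, if_neg (fun h => hij (Fin.ext h).symm), zero_mul]
          · exfalso
            rw [Finset.mem_erase] at hi
            exact hi.1 (Fin.ext (by have := i.isLt; omega))
        · intro h
          exact absurd (Finset.mem_erase.mpr ⟨fun h2 => hj (by rw [h2]),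
            Finset.mem_univ j⟩) h
    · rw [Finset.sum_eq_single k]
      · rw [hNdef]
        simp only [if_neg hk, if_pos rfl]
        rw [hM, if_pos (by have := k.isLt; omega)]
        simp [Matrix.one_apply, Fin.ext_iff]
      · intro i hi hik
        have : N i k = 0 := by rw [hNdef]; simp only [if_neg hk, if_neg hik]
        rw [this, mul_zero]
      · intro h; exact absurd (Finset.mem_univ k) h
  have hMinv : M⁻¹ = N := Matrix.inv_eq_right_inv hMN
  -- the key linearity identity
  have key : ∀ σ : KF R K n c, b.repr (θF R K n c * σ) ⟨n-1, by omega⟩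
      = b.repr σ ⟨n-2, by omega⟩ - a 1 / a 0 * b.repr σ ⟨n-1, by omega⟩ := by
    intro σ
    have hext : (Finsupp.lapply (⟨n-1, by omega⟩ : Fin n)) ∘ₗ (b.repr : KF R K n c →ₗ[K] (Fin n →₀ K)) ∘ₗ
          (LinearMap.mulLeft K (θF R K n c))
        = b.coord ⟨n-2, by omega⟩ - (a 1 / a 0) • b.coord ⟨n-1, by omega⟩ := by
      apply b.ext
      intro m
      have hbm : b m = θF R K n c ^ (m:ℕ) := basisKF_apply R K n c hne hdeg m
      simp only [LinearMap.comp_apply, LinearMap.mulLeft_apply, LinearMap.sub_apply,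
        LinearMap.smul_apply, Module.Basis.coord_apply, Finsupp.lapply_apply, LinearEquiv.coe_coe,
        smul_eq_mul]
      rw [hbm, ← pow_succ']
      by_cases hm : (m:ℕ) = n-1
      · rw [hm, show n-1+1 = n by omega, repr_pow_n R K n c hne hdeg hn,
          repr_pow R K n c hne hdeg _ (by omega), repr_pow R K n c hne hdeg _ (by omega)]
        simp only [hlast, show ((⟨n-2, by omega⟩ : Fin n) : ℕ) = n-2 from rfl,
          if_neg (show ¬(n-2 = n-1) by omega)]
        simp only [ha, if_true]
        ring
      · rw [repr_pow R K n c hne hdeg _ (by have := m.isLt; omega),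
          repr_pow R K n c hne hdeg _ (by have := m.isLt; omega),
          repr_pow R K n c hne hdeg _ (by have := m.isLt; omega)]
        simp only [hlast, show ((⟨n-2, by omega⟩ : Fin n) : ℕ) = n-2 from rfl]
        by_cases hm2 : (m:ℕ) = n-2
        · rw [if_pos (show n-1 = (m:ℕ)+1 by omega), if_pos (show n-2 = (m:ℕ) by omega),
            if_neg (show ¬(n-1 = (m:ℕ)) by omega)]
          ring
        · rw [if_neg (show ¬(n-1 = (m:ℕ)+1) by omega), if_neg (show ¬(n-2 = (m:ℕ)) by omega),
            if_neg (show ¬(n-1 = (m:ℕ)) by omega)]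
          ring
    have := congrArg (fun f => f σ) hext
    simpa using this
  -- compute the two sides
  have hmul : ∀ (ρ' : KF R K n c) (i : Fin n),
      coordStd R K n c hne hdeg ρ' i = Matrix.mulVec N (fun j => b.repr ρ' j) i := by
    intro ρ' i
    rw [coordStd, ← hb, ← hMdef, hMinv]
  rw [piN1, piN2, hmul, hmul]
  have hmv1 : Matrix.mulVec N (fun j => b.repr
        (ρ * (algebraMap R (KF R K n c) (c 0) * θF R K n c)) j) ⟨n-1, by omega⟩
      = (a 0)⁻¹ * b.repr (ρ * (algebraMap R (KF R K n c) (c 0) * θF R K n c)) ⟨n-1, by omega⟩ := by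
    rw [Matrix.mulVec, dotProduct, Finset.sum_eq_single (⟨n-1, by omega⟩ : Fin n)]
    · rw [hNdef]; simp
    · intro i hi hik
      have : (i:ℕ) ≠ n-1 := fun h => hik (Fin.ext h)
      have hN0 : N ⟨n-1, by omega⟩ i = 0 := by
        rw [hNdef]; simp only [if_neg this]
        rw [if_neg (fun h => hik h.symm)]
      rw [hN0, zero_mul]
    · intro h; exact absurd (Finset.mem_univ _) h
  have hmv2 : Matrix.mulVec N (fun j => b.repr ρ j) ⟨n-2, by omega⟩
      = b.repr ρ ⟨n-2, by omega⟩ + (- v ⟨n-2, by omega⟩ * (a 0)⁻¹) * b.repr ρ ⟨n-1, by omega⟩ := by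
    rw [Matrix.mulVec, dotProduct,
      ← Finset.sum_erase_add Finset.univ _ (Finset.mem_univ (⟨n-1, by omega⟩ : Fin n))]
    congr 1
    · rw [Finset.sum_eq_single (⟨n-2, by omega⟩ : Fin n)]
      · have : N ⟨n-2, by omega⟩ ⟨n-2, by omega⟩ = 1 := by
          rw [hNdef]; simp only [if_neg (show ¬(n-2 = n-1) by omega), if_pos rfl]
          simp
        rw [this, one_mul]
      · intro i hi hik
        rw [Finset.mem_erase] at hi
        have h1 : (i:ℕ) ≠ n-1 := fun h => hi.1 (Fin.ext h)
        have hN0 : N ⟨n-2, by omega⟩ i = 0 := by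
          rw [hNdef]; simp only [if_neg h1]
          rw [if_neg (fun h => hik h.symm)]
        rw [hN0, zero_mul]
      · intro h
        exact absurd (Finset.mem_erase.mpr ⟨by simp [Fin.ext_iff]; omega,
          Finset.mem_univ _⟩) h
    · have : N ⟨n-2, by omega⟩ ⟨n-1, by omega⟩ = - v ⟨n-2, by omega⟩ * (a 0)⁻¹ := by
        rw [hNdef]; simp only [hlast, if_pos rfl]
        simp only [if_neg (show ¬((n:ℕ)-2 = n-1) by omega)]
        simp
      rw [this]
  rw [hmv1, hmv2]
  have hrw : ρ * (algebraMap R (KF R K n c) (c 0) * θF R K n c)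
      = a 0 • (θF R K n c * ρ) := by
    rw [smul_eq R K n c, ha]; ring_nf
    rw [Algebra.smul_def, Algebra.smul_def]; ring
  rw [hrw, _root_.map_smul, Finsupp.smul_apply, smul_eq_mul, key ρ]
  have hv2 : v ⟨n-2, by omega⟩ = a 1 := by
    rw [hv]
    rw [if_neg (show ¬((⟨n-2, by omega⟩ : Fin n):ℕ) = 0 by simp; omega)]
    congr 1
    simp
    omega
  rw [hv2]
  field_simp
  ring



end BHS
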